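/- If Γ is a finite well-bounded partition of ℚ and Ω is a well-bounded partition of ℚ with infinitely many elements in some Ω_N (an infinite well-bounded partition), then τ_Γ is strictly coarser than τ_Ω. -/

import Mathlib

open scoped Classical

/-- The Hahn field `𝓕` of maps `ℚ → ℝ` with well-ordered support. -/
noncomputable abbrev F := HahnSeries ℚ ℝ

/-- A subset `A` of `ℚ` is well-bounded if every nonempty subset of `A`
has a maximum element. -/
def WellBoundedSet (A : Set ℚ) : Prop :=
  ∀ S ⊆ A, S.Nonempty → ∃ m ∈ S, ∀ a ∈ S, a ≤ m

/-- A well-bounded partition of `ℚ`: a countable family of mutually disjoint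
well-bounded sets whose union is all of `ℚ`. -/
def IsWBPartition (γ : ℕ → Set ℚ) : Prop :=
  Pairwise (Function.onFun Disjoint γ) ∧ (∀ i, WellBoundedSet (γ i)) ∧
    (⋃ i, γ i) = Set.univ

/-- A finite well-bounded partition of `ℚ`: each piece is moreover finite. -/
def IsFinWBPartition (γ : ℕ → Set ℚ) : Prop :=
  IsWBPartition γ ∧ ∀ i, (γ i).Finite

/-- `Γ_n`, the union of the first `n` pieces of the partition. -/
def Gam (γ : ℕ → Set ℚ) (n : ℕ) : Set ℚ := ⋃ i < n, γ i

/-- The semi-norm `‖x‖_{Γ,n} = max {|x[q]| : q ∈ Γ_n}` induced by a well-bounded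
partition `Γ` of `ℚ` (realized as a supremum together with `0`). -/
noncomputable def gnorm (γ : ℕ → Set ℚ) (n : ℕ) (x : F) : ℝ :=
  sSup (insert 0 ((fun q => |x.coeff q|) '' Gam γ n))

/-- `μ(r) = ⌈1/r⌉`. -/
noncomputable def mu (r : ℝ) : ℕ := ⌈1 / r⌉₊

/-- The pseudo-ball `B_Γ(x, r) = {y | ‖x − y‖_{Γ,μ(r)} < r}`. -/
def PB (γ : ℕ → Set ℚ) (x : F) (r : ℝ) : Set F :=
  {y : F | gnorm γ (mu r) (x - y) < r}

/-- The topology `τ_Γ` induced by the semi-norms of the partition `Γ`, as the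
collection of its open sets. -/
def Top' (γ : ℕ → Set ℚ) : Set (Set F) :=
  {O : Set F | ∀ x ∈ O, ∃ r : ℝ, 0 < r ∧ PB γ x r ⊆ O}

/-! ### Auxiliary lemmas -/

lemma wb_inter_finite {A B : Set ℚ} (hA : A.IsWF) (hB : WellBoundedSet B) :
    (A ∩ B).Finite := by
  rw [← Set.not_infinite]
  intro h
  set f : ℕ → ℚ := fun n => (h.natEmbedding _ n : ℚ) with hf
  have hfmem : ∀ n, f n ∈ A ∩ B := fun n => (h.natEmbedding _ n).2
  have hfinj : Function.Injective f := fun m n hmn =>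
    (h.natEmbedding _).injective (Subtype.val_injective hmn)
  obtain ⟨g, hg | hg⟩ := exists_increasing_or_nonincreasing_subseq
    ((· < ·) : ℚ → ℚ → Prop) f
  · obtain ⟨m, hmS, hmax⟩ := hB (Set.range (f ∘ g))
      (by rintro _ ⟨n, rfl⟩; exact (hfmem _).2) ⟨f (g 0), ⟨0, rfl⟩⟩
    obtain ⟨k, rfl⟩ := hmS
    exact absurd (hmax _ ⟨k + 1, rfl⟩) (not_le.2 (hg k (k + 1) (Nat.lt_succ_self k)))
  · have hanti : StrictAnti (f ∘ g) := by
      intro m n hmn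
      rcases lt_trichotomy (f (g n)) (f (g m)) with h1 | h1 | h1
      · exact h1
      · exact absurd (g.injective (hfinj h1)) (by omega)
      · exact absurd h1 (hg m n hmn)
    exact Set.isWF_iff_no_descending_seq.mp hA (f ∘ g) hanti fun n => (hfmem (g n)).1

lemma WellBoundedSet.union' {A B : Set ℚ} (hA : WellBoundedSet A) (hB : WellBoundedSet B) :
    WellBoundedSet (A ∪ B) := by
  intro S hS hSne
  by_cases h1 : (S ∩ A).Nonempty
  · obtain ⟨m1, hm1S, hm1⟩ := hA (S ∩ A) Set.inter_subset_right h1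
    by_cases h2 : (S ∩ B).Nonempty
    · obtain ⟨m2, hm2S, hm2⟩ := hB (S ∩ B) Set.inter_subset_right h2
      refine ⟨max m1 m2, ?_, ?_⟩
      · rcases le_total m1 m2 with h | h
        · rw [max_eq_right h]; exact hm2S.1
        · rw [max_eq_left h]; exact hm1S.1
      · intro a haS
        rcases hS haS with hA' | hB'
        · exact le_max_of_le_left (hm1 a ⟨haS, hA'⟩)
        · exact le_max_of_le_right (hm2 a ⟨haS, hB'⟩)
    · refine ⟨m1, hm1S.1, fun a haS => ?_⟩
      rcases hS haS with hA' | hB'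
      · exact hm1 a ⟨haS, hA'⟩
      · exact absurd ⟨a, haS, hB'⟩ h2
  · obtain ⟨m, hmS, hm⟩ := hB S (fun a haS => (hS haS).resolve_left
      (fun hA' => h1 ⟨a, haS, hA'⟩)) hSne
    exact ⟨m, hmS, hm⟩

lemma gam_succ (Ω : ℕ → Set ℚ) (n : ℕ) : Gam Ω (n + 1) = Gam Ω n ∪ Ω n := by
  ext q
  simp only [Gam, Set.mem_iUnion, Set.mem_union, Nat.lt_succ_iff_lt_or_eq]
  constructor
  · rintro ⟨i, hi | rfl, hq⟩
    exacts [Or.inl ⟨i, hi, hq⟩, Or.inr hq]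
  · rintro (⟨i, hi, hq⟩ | hq)
    exacts [⟨i, Or.inl hi, hq⟩, ⟨n, Or.inr rfl, hq⟩]

lemma gam_wb {Ω : ℕ → Set ℚ} (hΩ : ∀ i, WellBoundedSet (Ω i)) (n : ℕ) :
    WellBoundedSet (Gam Ω n) := by
  induction n with
  | zero =>
      intro S hS hSne
      obtain ⟨a, ha⟩ := hSne
      have := hS ha
      simp [Gam] at this
  | succ n ih =>
      rw [gam_succ]
      exact ih.union' (hΩ n)

lemma gam_mono (Ω : ℕ → Set ℚ) {n m : ℕ} (h : n ≤ m) : Gam Ω n ⊆ Gam Ω m := by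
  intro q hq
  simp only [Gam, Set.mem_iUnion] at hq ⊢
  obtain ⟨i, hi, hq⟩ := hq
  exact ⟨i, lt_of_lt_of_le hi h, hq⟩

lemma gnorm_bdd {Ω : ℕ → Set ℚ} (hΩ : ∀ i, WellBoundedSet (Ω i)) (n : ℕ) (z : F) :
    BddAbove (insert 0 ((fun q => |z.coeff q|) '' Gam Ω n)) := by
  have hfin : ((fun q => |z.coeff q|) '' (z.support ∩ Gam Ω n)).Finite :=
    (wb_inter_finite z.isWF_support (gam_wb hΩ n)).image _
  refine BddAbove.mono ?_ (hfin.insert 0).bddAbove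
  rintro a (rfl | ⟨q, hq, rfl⟩)
  · exact Set.mem_insert _ _
  · by_cases hz : z.coeff q = 0
    · simp [hz]
    · exact Set.mem_insert_of_mem _ ⟨q, ⟨hz, hq⟩, rfl⟩

lemma gnorm_nonneg {Ω : ℕ → Set ℚ} (hΩ : ∀ i, WellBoundedSet (Ω i)) (n : ℕ) (z : F) :
    0 ≤ gnorm Ω n z :=
  le_csSup (gnorm_bdd hΩ n z) (Set.mem_insert _ _)

lemma coeff_le_gnorm {Ω : ℕ → Set ℚ} (hΩ : ∀ i, WellBoundedSet (Ω i)) {n : ℕ} {q : ℚ}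
    (hq : q ∈ Gam Ω n) (z : F) : |z.coeff q| ≤ gnorm Ω n z :=
  le_csSup (gnorm_bdd hΩ n z) (Set.mem_insert_of_mem _ ⟨q, hq, rfl⟩)

lemma gnorm_le {Ω : ℕ → Set ℚ} {n : ℕ} {z : F} {c : ℝ} (hc : 0 ≤ c)
    (h : ∀ q ∈ Gam Ω n, |z.coeff q| ≤ c) : gnorm Ω n z ≤ c :=
  Real.sSup_le (by rintro a (rfl | ⟨q, hq, rfl⟩); exacts [hc, h q hq]) hc

lemma gnorm_mono {Ω : ℕ → Set ℚ} (hΩ : ∀ i, WellBoundedSet (Ω i)) {n m : ℕ}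
    (h : n ≤ m) (z : F) : gnorm Ω n z ≤ gnorm Ω m z :=
  gnorm_le (gnorm_nonneg hΩ m z) fun q hq => coeff_le_gnorm hΩ (gam_mono Ω h hq) z

lemma gnorm_triangle {Ω : ℕ → Set ℚ} (hΩ : ∀ i, WellBoundedSet (Ω i)) (n : ℕ)
    (x y z : F) : gnorm Ω n (x - z) ≤ gnorm Ω n (x - y) + gnorm Ω n (y - z) := by
  refine gnorm_le (add_nonneg (gnorm_nonneg hΩ n _) (gnorm_nonneg hΩ n _)) fun q hq => ?_
  have h1 : |(x - z).coeff q| ≤ |(x - y).coeff q| + |(y - z).coeff q| := by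
    simp only [HahnSeries.coeff_sub]
    exact abs_sub_le _ _ _
  exact h1.trans (add_le_add (coeff_le_gnorm hΩ hq _) (coeff_le_gnorm hΩ hq _))

lemma gnorm_zero {Ω : ℕ → Set ℚ} (hΩ : ∀ i, WellBoundedSet (Ω i)) (n : ℕ) :
    gnorm Ω n 0 = 0 :=
  le_antisymm (gnorm_le le_rfl (by simp [HahnSeries.coeff_zero])) (gnorm_nonneg hΩ n 0)

lemma mu_anti {r r' : ℝ} (hr : 0 < r) (h : r ≤ r') : mu r' ≤ mu r :=
  Nat.ceil_le_ceil (by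
    apply one_div_le_one_div_of_le hr h)

lemma gam_fin {γ : ℕ → Set ℚ} (hγ : ∀ i, (γ i).Finite) (n : ℕ) : (Gam γ n).Finite := by
  induction n with
  | zero => simp [Gam]
  | succ n ih => rw [gam_succ]; exact ih.union (hγ n)

/-- If `Γ` is a finite well-bounded partition of `ℚ` and `Ω` is an infinite
well-bounded partition (some `Ω_N` is an infinite set), then `τ_Γ` is strictly
coarser than `τ_Ω`. -/
theorem finite_partition_topology_strictly_coarser
    (γ Ω : ℕ → Set ℚ) (hγ : IsFinWBPartition γ) (hΩ : IsWBPartition Ω)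
    (hinf : ∃ N : ℕ, (Gam Ω N).Infinite) :
    Top' γ ⊆ Top' Ω ∧ ∃ O ∈ Top' Ω, O ∉ Top' γ := by
  obtain ⟨⟨_, hγwb, hγcov⟩, hγfin⟩ := hγ
  obtain ⟨_, hΩwb, hΩcov⟩ := hΩ
  constructor
  · -- τ_Γ ⊆ τ_Ω
    intro O hO x hx
    obtain ⟨r, hr, hball⟩ := hO x hx
    have hSfin : (Gam γ (mu r)).Finite := gam_fin hγfin _
    have hidx : ∀ q : ℚ, ∃ i, q ∈ Ω i := fun q => by
      have : q ∈ ⋃ i, Ω i := hΩcov ▸ Set.mem_univ q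
      exact Set.mem_iUnion.mp this
    choose idx hidxmem using hidx
    set M : ℕ := hSfin.toFinset.sup idx + 1 with hM
    have hSM : Gam γ (mu r) ⊆ Gam Ω M := by
      intro q hq
      have hlt : idx q < M :=
        Nat.lt_succ_of_le (Finset.le_sup (hSfin.mem_toFinset.2 hq))
      exact Set.mem_iUnion.2 ⟨idx q, Set.mem_iUnion.2 ⟨hlt, hidxmem q⟩⟩
    set r'' : ℝ := min r (1 / (M + 1)) with hr''def
    have hr''pos : (0 : ℝ) < r'' := lt_min hr (by positivity)
    refine ⟨r'', hr''pos, ?_⟩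
    intro y hy
    apply hball
    have hMmu : M ≤ mu r'' := by
      have h1 : r'' ≤ 1 / (M + 1) := min_le_right _ _
      have h2 : ((M : ℝ) + 1) ≤ 1 / r'' := by
        calc ((M : ℝ) + 1) = 1 / (1 / ((M : ℝ) + 1)) := by
              rw [one_div_one_div]
          _ ≤ 1 / r'' := one_div_le_one_div_of_le hr''pos h1
      have : (M : ℝ) < 1 / r'' := lt_of_lt_of_le (by linarith) h2
      exact le_of_lt (Nat.lt_ceil.2 this)
    have hsub : Gam γ (mu r) ⊆ Gam Ω (mu r'') :=
      hSM.trans (gam_mono Ω hMmu)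
    -- every coefficient on Gam γ (mu r) is < r
    have hcoef : ∀ q ∈ Gam γ (mu r), |(x - y).coeff q| < r := fun q hq =>
      lt_of_le_of_lt (coeff_le_gnorm hΩwb (hsub hq) _)
        (lt_of_lt_of_le hy (min_le_left _ _))
    show gnorm γ (mu r) (x - y) < r
    have hTfin : (insert 0 ((fun q => |(x - y).coeff q|) '' Gam γ (mu r))).Finite :=
      (hSfin.image _).insert 0
    have hTne : (insert 0 ((fun q => |(x - y).coeff q|) '' Gam γ (mu r))).Nonempty :=
      ⟨0, Set.mem_insert _ _⟩
    have := hTne.csSup_mem hTfin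
    rcases this with h0 | ⟨q, hq, hval⟩
    · rw [gnorm, h0]; exact hr
    · rw [gnorm, ← hval]; exact hcoef q hq
  · -- strictness
    obtain ⟨N, hN⟩ := hinf
    set r : ℝ := 1 / ((N : ℝ) + 1) with hrdef
    have hrpos : 0 < r := by positivity
    have hNmu : N ≤ mu r := by
      have : 1 / r = (N : ℝ) + 1 := one_div_one_div _
      have h2 : (N : ℝ) < 1 / r := by rw [this]; linarith
      exact le_of_lt (Nat.lt_ceil.2 h2)
    refine ⟨PB Ω 0 r, ?_, ?_⟩
    · -- the ball is Ω-open
      intro y hy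
      have hs : gnorm Ω (mu r) (0 - y) < r := hy
      have hsnn : 0 ≤ gnorm Ω (mu r) (0 - y) := gnorm_nonneg hΩwb _ _
      set r'' : ℝ := min (r - gnorm Ω (mu r) (0 - y)) r with hr''def
      have hr''pos : 0 < r'' := lt_min (by linarith) hrpos
      refine ⟨r'', hr''pos, ?_⟩
      intro z hz
      have hmu : mu r ≤ mu r'' := mu_anti hr''pos (min_le_right _ _)
      have h1 : gnorm Ω (mu r) (0 - z) ≤
          gnorm Ω (mu r) (0 - y) + gnorm Ω (mu r) (y - z) :=
        gnorm_triangle hΩwb _ 0 y z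
      have h2 : gnorm Ω (mu r) (y - z) ≤ gnorm Ω (mu r'') (y - z) :=
        gnorm_mono hΩwb hmu _
      have h3 : gnorm Ω (mu r'') (y - z) < r'' := hz
      have h4 : r'' ≤ r - gnorm Ω (mu r) (0 - y) := min_le_left _ _
      show gnorm Ω (mu r) (0 - z) < r
      linarith
    · -- not γ-open
      intro hO
      have h0mem : (0 : F) ∈ PB Ω 0 r := by
        show gnorm Ω (mu r) (0 - 0) < r
        rw [sub_zero, gnorm_zero hΩwb]
        exact hrpos
      obtain ⟨r', hr', hball⟩ := hO 0 h0mem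
      have hfin : (Gam γ (mu r')).Finite := gam_fin hγfin _
      have hdiff : (Gam Ω N \ Gam γ (mu r')).Infinite := hN.diff hfin
      obtain ⟨q, hqΩ, hqγ⟩ := hdiff.nonempty
      set y : F := HahnSeries.single q r with hydef
      have hymem : y ∈ PB γ 0 r' := by
        show gnorm γ (mu r') (0 - y) < r'
        refine lt_of_le_of_lt (gnorm_le le_rfl fun p hp => ?_) hr'
        have hpq : p ≠ q := fun h => hqγ (h ▸ hp)
        simp [hydef, HahnSeries.coeff_sub, HahnSeries.coeff_single_of_ne hpq]
      have hynot : y ∉ PB Ω 0 r := by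
        intro hy
        have hq' : q ∈ Gam Ω (mu r) := gam_mono Ω hNmu hqΩ
        have := coeff_le_gnorm hΩwb hq' (0 - y)
        rw [HahnSeries.coeff_sub, HahnSeries.coeff_zero, hydef,
          HahnSeries.coeff_single_same] at this
        have : r ≤ gnorm Ω (mu r) (0 - y) := by
          rwa [zero_sub, abs_neg, abs_of_pos hrpos] at this
        exact absurd hy (not_lt.2 this)
      exact hynot (hball hymem)
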